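/- For all x ∈ ℝ and 0 < ρ₀ < ρ, |H(x, ρ) − H(x, ρ₀)| ≤ min((ρ + ρ₀)/(ρρ₀), π) · (ρ − ρ₀)/(ρ₀ρ), where H(x, ρ) = (1/π) ∫₀^π cos(x(θ + sin θ))/(ρ² + sin²θ) dθ. -/

import Mathlib

open Real intervalIntegral

lemma den_pos (a θ : ℝ) (ha : 0 < a) : 0 < a ^ 2 + Real.sin θ ^ 2 := by positivity

lemma cont_inv_den (a : ℝ) (ha : 0 < a) :
    Continuous fun θ : ℝ => 1 / (a ^ 2 + Real.sin θ ^ 2) := by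
  apply Continuous.div continuous_const (by continuity)
  intro θ; exact (den_pos a θ ha).ne'

lemma half_integral_le (a : ℝ) (ha : 0 < a) :
    ∫ θ in (0:ℝ)..(π/2), 1 / (a ^ 2 + Real.sin θ ^ 2) ≤ π ^ 2 / (4 * a) := by
  have hπ := Real.pi_pos
  have hcomp : ∫ θ in (0:ℝ)..(π/2), 1 / (a ^ 2 + Real.sin θ ^ 2) ≤
      ∫ θ in (0:ℝ)..(π/2), 1 / (a ^ 2 + (2 / π * θ) ^ 2) := by
    apply integral_mono_on (by positivity)
    · exact ((cont_inv_den a ha)).intervalIntegrable _ _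
    · apply Continuous.intervalIntegrable
      apply Continuous.div continuous_const (by continuity)
      intro θ
      have h2 : (0:ℝ) ≤ (2 / π * θ)^2 := sq_nonneg _
      positivity
    · intro θ hθ
      have h1 : 2 / π * θ ≤ Real.sin θ := Real.mul_le_sin hθ.1 hθ.2
      have h0 : 0 ≤ 2 / π * θ := mul_nonneg (by positivity) hθ.1
      have hs : 0 ≤ Real.sin θ := Real.sin_nonneg_of_nonneg_of_le_pi hθ.1 (by linarith [hθ.2])
      have hpos : 0 < a ^ 2 + (2 / π * θ) ^ 2 := by
        have := sq_nonneg (2 / π * θ); positivity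
      apply one_div_le_one_div_of_le hpos
      nlinarith
  have hftc : ∫ θ in (0:ℝ)..(π/2), 1 / (a ^ 2 + (2 / π * θ) ^ 2)
      = π / (2 * a) * Real.arctan (1 / a) := by
    have hderiv : ∀ θ ∈ Set.uIcc (0:ℝ) (π/2),
        HasDerivAt (fun θ : ℝ => π / (2 * a) * Real.arctan (2 / (π * a) * θ))
          (1 / (a ^ 2 + (2 / π * θ) ^ 2)) θ := by
      intro θ _
      have h := ((Real.hasDerivAt_arctan (2 / (π * a) * θ)).comp θ
        ((hasDerivAt_id θ).const_mul (2 / (π * a)))).const_mul (π / (2 * a))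
      refine h.congr_deriv ?_
      have h1 : π * a ≠ 0 := by positivity
      field_simp
    rw [integral_eq_sub_of_hasDerivAt hderiv]
    · have h1 : 2 / (π * a) * (π / 2) = 1 / a := by field_simp
      rw [h1]
      simp
    · apply Continuous.intervalIntegrable
      apply Continuous.div continuous_const (by continuity)
      intro θ
      have h2 : (0:ℝ) ≤ (2 / π * θ)^2 := sq_nonneg _
      positivity
  have harc : Real.arctan (1 / a) ≤ π / 2 := (Real.arctan_lt_pi_div_two _).le
  calc _ ≤ π / (2 * a) * Real.arctan (1 / a) := by rw [← hftc]; exact hcomp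
    _ ≤ π / (2 * a) * (π / 2) := mul_le_mul_of_nonneg_left harc (by positivity)
    _ = π ^ 2 / (4 * a) := by ring

lemma full_integral_le (a : ℝ) (ha : 0 < a) :
    ∫ θ in (0:ℝ)..π, 1 / (a ^ 2 + Real.sin θ ^ 2) ≤ π ^ 2 / (2 * a) := by
  have hπ := Real.pi_pos
  have hint : ∀ u v : ℝ, IntervalIntegrable (fun θ => 1 / (a ^ 2 + Real.sin θ ^ 2)) MeasureTheory.volume u v :=
    fun u v => (cont_inv_den a ha).intervalIntegrable u v
  have hsplit : ∫ θ in (0:ℝ)..π, 1 / (a ^ 2 + Real.sin θ ^ 2)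
      = (∫ θ in (0:ℝ)..(π/2), 1 / (a ^ 2 + Real.sin θ ^ 2))
        + ∫ θ in (π/2)..π, 1 / (a ^ 2 + Real.sin θ ^ 2) :=
    (integral_add_adjacent_intervals (hint 0 (π/2)) (hint (π/2) π)).symm
  have hsym : ∫ θ in (π/2)..π, 1 / (a ^ 2 + Real.sin θ ^ 2)
      = ∫ θ in (0:ℝ)..(π/2), 1 / (a ^ 2 + Real.sin θ ^ 2) := by
    have h := integral_comp_sub_left (a := (0:ℝ)) (b := π/2)
      (fun θ => 1 / (a ^ 2 + Real.sin θ ^ 2)) π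
    simp only [Real.sin_pi_sub, sub_zero] at h
    rw [show π - π/2 = π/2 by ring] at h
    exact h.symm
  rw [hsplit, hsym]
  have h1 := half_integral_le a ha
  have h2 : π^2/(4*a) + π^2/(4*a) = π^2/(2*a) := by ring
  linarith

set_option maxHeartbeats 1000000 in
theorem good_H_lipschitz_rho (x ρ ρ₀ : ℝ) (hρ₀ : 0 < ρ₀) (hρ : ρ₀ < ρ) :
    |((1 / π) * ∫ θ in (0:ℝ)..π, Real.cos (x * (θ + Real.sin θ)) / (ρ ^ 2 + Real.sin θ ^ 2)) -
      ((1 / π) * ∫ θ in (0:ℝ)..π, Real.cos (x * (θ + Real.sin θ)) / (ρ₀ ^ 2 + Real.sin θ ^ 2))| ≤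
      min ((ρ + ρ₀) / (ρ * ρ₀)) π * ((ρ - ρ₀) / (ρ₀ * ρ)) := by
  have hπ := Real.pi_pos
  have hρpos : 0 < ρ := hρ₀.trans hρ
  have hcont : ∀ a : ℝ, 0 < a → Continuous
      (fun θ : ℝ => Real.cos (x * (θ + Real.sin θ)) / (a ^ 2 + Real.sin θ ^ 2)) := by
    intro a ha
    apply Continuous.div (by continuity) (by continuity)
    intro θ
    positivity
  have hint : ∀ a : ℝ, 0 < a → IntervalIntegrable
      (fun θ : ℝ => Real.cos (x * (θ + Real.sin θ)) / (a ^ 2 + Real.sin θ ^ 2))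
      MeasureTheory.volume 0 π := fun a ha => (hcont a ha).intervalIntegrable 0 π
  rw [← mul_sub, ← integral_sub (hint ρ hρpos) (hint ρ₀ hρ₀), abs_mul,
    abs_of_pos (by positivity : (0:ℝ) < 1/π)]
  set D := ∫ θ in (0:ℝ)..π,
      (Real.cos (x * (θ + Real.sin θ)) / (ρ ^ 2 + Real.sin θ ^ 2) -
        Real.cos (x * (θ + Real.sin θ)) / (ρ₀ ^ 2 + Real.sin θ ^ 2)) with hD
  clear_value D
  -- pointwise bound on the integrand of D
  have hpt : ∀ θ : ℝ,
      |Real.cos (x * (θ + Real.sin θ)) / (ρ ^ 2 + Real.sin θ ^ 2) -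
        Real.cos (x * (θ + Real.sin θ)) / (ρ₀ ^ 2 + Real.sin θ ^ 2)|
      ≤ (ρ ^ 2 - ρ₀ ^ 2) / ((ρ ^ 2 + Real.sin θ ^ 2) * (ρ₀ ^ 2 + Real.sin θ ^ 2)) := by
    intro θ
    have hA : 0 < ρ ^ 2 + Real.sin θ ^ 2 := by positivity
    have hB : 0 < ρ₀ ^ 2 + Real.sin θ ^ 2 := by positivity
    have hkey : Real.cos (x * (θ + Real.sin θ)) / (ρ ^ 2 + Real.sin θ ^ 2) -
        Real.cos (x * (θ + Real.sin θ)) / (ρ₀ ^ 2 + Real.sin θ ^ 2)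
        = Real.cos (x * (θ + Real.sin θ)) *
          ((ρ₀ ^ 2 - ρ ^ 2) / ((ρ ^ 2 + Real.sin θ ^ 2) * (ρ₀ ^ 2 + Real.sin θ ^ 2))) := by
      rw [div_sub_div _ _ hA.ne' hB.ne', ← mul_div_assoc]
      congr 1
      ring
    rw [hkey, abs_mul]
    have h1 : |(ρ₀ ^ 2 - ρ ^ 2) / ((ρ ^ 2 + Real.sin θ ^ 2) * (ρ₀ ^ 2 + Real.sin θ ^ 2))|
        = (ρ ^ 2 - ρ₀ ^ 2) / ((ρ ^ 2 + Real.sin θ ^ 2) * (ρ₀ ^ 2 + Real.sin θ ^ 2)) := by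
      rw [abs_div, abs_of_pos (mul_pos hA hB), abs_of_nonpos (by nlinarith : ρ₀ ^ 2 - ρ ^ 2 ≤ 0)]
      ring
    rw [h1]
    have h2 := Real.abs_cos_le_one (x * (θ + Real.sin θ))
    have h3 : 0 ≤ (ρ ^ 2 - ρ₀ ^ 2) / ((ρ ^ 2 + Real.sin θ ^ 2) * (ρ₀ ^ 2 + Real.sin θ ^ 2)) :=
      div_nonneg (by nlinarith) (mul_pos hA hB).le
    nlinarith [abs_nonneg (Real.cos (x * (θ + Real.sin θ)))]
  -- Bound 1 : constant bound
  have hb1 : |D| ≤ (ρ ^ 2 - ρ₀ ^ 2) / (ρ ^ 2 * ρ₀ ^ 2) * π := by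
    have := intervalIntegral.norm_integral_le_of_norm_le_const (a := (0:ℝ)) (b := π)
      (C := (ρ ^ 2 - ρ₀ ^ 2) / (ρ ^ 2 * ρ₀ ^ 2))
      (f := fun θ : ℝ => Real.cos (x * (θ + Real.sin θ)) / (ρ ^ 2 + Real.sin θ ^ 2) -
        Real.cos (x * (θ + Real.sin θ)) / (ρ₀ ^ 2 + Real.sin θ ^ 2)) ?_
    · rw [hD]
      simpa [abs_of_pos hπ] using this
    · intro θ _
      refine (hpt θ).trans ?_
      gcongr <;> nlinarith [sq_nonneg (Real.sin θ)]
  -- Bound 2 : via the integral of 1/(ρ₀² + sin²θ)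
  have hb2 : |D| ≤ (ρ ^ 2 - ρ₀ ^ 2) / ρ ^ 2 * (π ^ 2 / (2 * ρ₀)) := by
    have hg : IntervalIntegrable
        (fun θ : ℝ => (ρ ^ 2 - ρ₀ ^ 2) / ρ ^ 2 * (1 / (ρ₀ ^ 2 + Real.sin θ ^ 2)))
        MeasureTheory.volume 0 π := by
      apply Continuous.intervalIntegrable
      apply Continuous.mul continuous_const
      apply Continuous.div continuous_const (by continuity)
      intro θ; positivity
    have hle := intervalIntegral.norm_integral_le_abs_of_norm_le (a := (0:ℝ)) (b := π)
      (μ := MeasureTheory.volume)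
      (f := fun θ : ℝ => Real.cos (x * (θ + Real.sin θ)) / (ρ ^ 2 + Real.sin θ ^ 2) -
        Real.cos (x * (θ + Real.sin θ)) / (ρ₀ ^ 2 + Real.sin θ ^ 2))
      (g := fun θ : ℝ => (ρ ^ 2 - ρ₀ ^ 2) / ρ ^ 2 * (1 / (ρ₀ ^ 2 + Real.sin θ ^ 2)))
      ?_ hg
    · have hgval : ∫ θ in (0:ℝ)..π,
          (ρ ^ 2 - ρ₀ ^ 2) / ρ ^ 2 * (1 / (ρ₀ ^ 2 + Real.sin θ ^ 2))
          = (ρ ^ 2 - ρ₀ ^ 2) / ρ ^ 2 * ∫ θ in (0:ℝ)..π, 1 / (ρ₀ ^ 2 + Real.sin θ ^ 2) :=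
        intervalIntegral.integral_const_mul _ _
      have hInonneg : 0 ≤ ∫ θ in (0:ℝ)..π, 1 / (ρ₀ ^ 2 + Real.sin θ ^ 2) := by
        apply intervalIntegral.integral_nonneg hπ.le
        intro θ _
        positivity
      have hIle := full_integral_le ρ₀ hρ₀
      calc |D| ≤ |∫ θ in (0:ℝ)..π,
            (ρ ^ 2 - ρ₀ ^ 2) / ρ ^ 2 * (1 / (ρ₀ ^ 2 + Real.sin θ ^ 2))| := by
              rw [hD]; simpa using hle
        _ = (ρ ^ 2 - ρ₀ ^ 2) / ρ ^ 2 * ∫ θ in (0:ℝ)..π, 1 / (ρ₀ ^ 2 + Real.sin θ ^ 2) := by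
            rw [hgval, abs_of_nonneg (mul_nonneg (div_nonneg (by nlinarith) (by positivity)) hInonneg)]
        _ ≤ (ρ ^ 2 - ρ₀ ^ 2) / ρ ^ 2 * (π ^ 2 / (2 * ρ₀)) :=
            mul_le_mul_of_nonneg_left hIle (div_nonneg (by nlinarith) (by positivity))
    · filter_upwards with θ
      refine (hpt θ).trans ?_
      rw [div_mul_div_comm, mul_one]
      gcongr <;> nlinarith [sq_nonneg (Real.sin θ)]
  -- combine
  rw [min_mul_of_nonneg _ _ (div_nonneg (by linarith) (by positivity) : (0:ℝ) ≤ (ρ - ρ₀) / (ρ₀ * ρ))]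
  apply le_min
  · calc 1 / π * |D| ≤ 1 / π * ((ρ ^ 2 - ρ₀ ^ 2) / (ρ ^ 2 * ρ₀ ^ 2) * π) :=
        mul_le_mul_of_nonneg_left hb1 (by positivity)
      _ = (ρ + ρ₀) / (ρ * ρ₀) * ((ρ - ρ₀) / (ρ₀ * ρ)) := by field_simp; ring
  · calc 1 / π * |D| ≤ 1 / π * ((ρ ^ 2 - ρ₀ ^ 2) / ρ ^ 2 * (π ^ 2 / (2 * ρ₀))) :=
        mul_le_mul_of_nonneg_left hb2 (by positivity)
      _ = π * ((ρ + ρ₀) * (ρ - ρ₀) / (2 * ρ ^ 2 * ρ₀)) := by field_simp; ring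
      _ ≤ π * ((ρ - ρ₀) / (ρ₀ * ρ)) := by
          have h : (ρ + ρ₀) * (ρ - ρ₀) / (2 * ρ ^ 2 * ρ₀) ≤ (ρ - ρ₀) / (ρ₀ * ρ) := by
            rw [div_le_div_iff₀ (by positivity) (by positivity)]
            nlinarith [mul_nonneg (mul_nonneg (sq_nonneg (ρ - ρ₀)) hρ₀.le) hρpos.le]
          exact mul_le_mul_of_nonneg_left h hπ.le
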